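/- For every natural number n, X₀((7x + 20 y/y' - 24 y⁴/y'³)^{n+1}) = (n+1)·(27u²/y'⁴)·(7x + 20 y/y' - 24 y⁴/y'³)^n, where u = y'^2 - 4y^3. -/
import Mathlib


open MvPolynomial

set_option synthInstance.maxHeartbeats 1000000
set_option maxHeartbeats 1000000

noncomputable section

abbrev P3 : Type := MvPolynomial (Fin 3) ℂ
/-- The field of rational functions `ℂ(x, y, y')`. -/
abbrev K : Type := FractionRing P3

/-- The derivation `X₀ = ∂/∂x + y' ∂/∂y + 6y² ∂/∂y'` on polynomials. -/
def X0 (f : P3) : P3 :=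
  pderiv 0 f + X 2 * pderiv 1 f + 6 * (X 1) ^ 2 * pderiv 2 f

def xK : K := algebraMap P3 K (X 0)
def yK : K := algebraMap P3 K (X 1)
def zK : K := algebraMap P3 K (X 2)  -- the coordinate y'
/-- `u = y'² - 4y³`. -/
def uK : K := zK ^ 2 - 4 * yK ^ 3

lemma zK_ne_zero : zK ≠ 0 := by
  simp only [zK]
  intro h
  have := (map_eq_zero_iff _ (IsFractionRing.injective P3 K)).mp h
  exact MvPolynomial.X_ne_zero _ this

lemma DxK (D : Derivation ℂ K K)
    (hD : ∀ p : P3, D (algebraMap P3 K p) = algebraMap P3 K (X0 p)) : D xK = 1 := by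
  rw [xK, hD]
  simp [X0]

lemma DyK (D : Derivation ℂ K K)
    (hD : ∀ p : P3, D (algebraMap P3 K p) = algebraMap P3 K (X0 p)) : D yK = zK := by
  rw [yK, hD]
  simp [X0, zK]

lemma DzK (D : Derivation ℂ K K)
    (hD : ∀ p : P3, D (algebraMap P3 K p) = algebraMap P3 K (X0 p)) : D zK = 6 * yK ^ 2 := by
  rw [zK, hD]
  simp [X0, yK, map_ofNat]

lemma Dw (D : Derivation ℂ K K)
    (hD : ∀ p : P3, D (algebraMap P3 K p) = algebraMap P3 K (X0 p)) :
    D (7 * xK + 20 * yK / zK - 24 * yK ^ 4 / zK ^ 3) = 27 * uK ^ 2 / zK ^ 4 := by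
  have hz := zK_ne_zero
  have h7 : D (7 : K) = 0 := by
    rw [show (7 : K) = ((7 : ℕ) : K) by norm_num]; exact D.map_natCast 7
  have h20 : D (20 : K) = 0 := by
    rw [show (20 : K) = ((20 : ℕ) : K) by norm_num]; exact D.map_natCast 20
  have h24 : D (24 : K) = 0 := by
    rw [show (24 : K) = ((24 : ℕ) : K) by norm_num]; exact D.map_natCast 24
  rw [map_sub, map_add, Derivation.leibniz_div, Derivation.leibniz_div]
  simp only [Derivation.leibniz, Derivation.leibniz_pow, DxK D hD, DyK D hD, DzK D hD,
    h7, h20, h24, smul_eq_mul, nsmul_eq_mul, mul_zero, zero_mul, add_zero, zero_add,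
    mul_one, Nat.cast_ofNat, uK]
  field_simp
  ring

theorem stmt2 (D : Derivation ℂ K K)
    (hD : ∀ p : P3, D (algebraMap P3 K p) = algebraMap P3 K (X0 p)) :
    ∀ n : ℕ,
      D ((7 * xK + 20 * yK / zK - 24 * yK ^ 4 / zK ^ 3) ^ (n + 1)) =
        ((n : K) + 1) * (27 * uK ^ 2 / zK ^ 4) * (7 * xK + 20 * yK / zK - 24 * yK ^ 4 / zK ^ 3) ^ n := by
  intro n
  rw [Derivation.leibniz_pow, Dw D hD]
  simp only [Nat.add_sub_cancel, smul_eq_mul, nsmul_eq_mul, Nat.cast_add, Nat.cast_one]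
  ring
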